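/- Let D be the linear map on m×m real matrices given by D(X) = ρ·X − X·ρ. Then D⁵ + 5·D³ + 4·D = 0, i.e. for every m×m real matrix X one has D(D(D(D(D(X))))) + 5·D(D(D(X))) + 4·D(X) = 0. -/
import Mathlib


open Matrix

/-- The standard complex structure matrix `J = [[0, -Id_n],[Id_n, 0]]`. -/
noncomputable def Jmat (n : ℕ) : Matrix (Fin n ⊕ Fin n) (Fin n ⊕ Fin n) ℝ :=
  Matrix.fromBlocks 0 (-1) 1 0

/-- The matrix `ρ = [[0,0],[0,J]]` with block sizes `k` and `2n`. -/
noncomputable def rhoMat (k n : ℕ) :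
    Matrix (Fin k ⊕ (Fin n ⊕ Fin n)) (Fin k ⊕ (Fin n ⊕ Fin n)) ℝ :=
  Matrix.fromBlocks 0 0 0 (Jmat n)

/-- The derivation `D = ad ρ : X ↦ ρ·X − X·ρ`. -/
noncomputable def adRho (k n : ℕ) :
    Matrix (Fin k ⊕ (Fin n ⊕ Fin n)) (Fin k ⊕ (Fin n ⊕ Fin n)) ℝ →
      Matrix (Fin k ⊕ (Fin n ⊕ Fin n)) (Fin k ⊕ (Fin n ⊕ Fin n)) ℝ :=
  fun X => rhoMat k n * X - X * rhoMat k n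

/-- Abstract commutator quintic identity in any ring, given `r ^ 3 = -r`. -/
lemma adc_quintic {R : Type*} [Ring R] (r : R) (h : r ^ 3 = -r) (X : R)
    (d : R → R) (hd : ∀ Y, d Y = r * Y - Y * r) :
    d (d (d (d (d X)))) + 5 * d (d (d X)) + 4 * d X = 0 := by
  have h4 : r ^ 4 = -(r ^ 2) := by
    rw [show r ^ 4 = r ^ 3 * r by rw [← pow_succ], h]; noncomm_ring
  have h5 : r ^ 5 = r := by
    rw [show r ^ 5 = r ^ 3 * r ^ 2 by rw [← pow_add], h,
      show -r * r ^ 2 = -(r ^ 3) by noncomm_ring, h, neg_neg]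
  have e3 : d (d (d X)) =
      r ^ 3 * X - 3 * (r ^ 2 * X * r) + 3 * (r * X * r ^ 2) - X * r ^ 3 := by
    simp only [hd]; noncomm_ring
  have e5 : d (d (d (d (d X)))) =
      r ^ 5 * X - 5 * (r ^ 4 * X * r) + 10 * (r ^ 3 * X * r ^ 2)
        - 10 * (r ^ 2 * X * r ^ 3) + 5 * (r * X * r ^ 4) - X * r ^ 5 := by
    simp only [hd]; noncomm_ring
  rw [e5, e3, hd, h, h4, h5]
  noncomm_ring

theorem adRho_quintic (k n : ℕ) (hk : 0 < k) (hn : 0 < n)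
    (X : Matrix (Fin k ⊕ (Fin n ⊕ Fin n)) (Fin k ⊕ (Fin n ⊕ Fin n)) ℝ) :
    adRho k n (adRho k n (adRho k n (adRho k n (adRho k n X)))) +
      (5 : ℝ) • adRho k n (adRho k n (adRho k n X)) + (4 : ℝ) • adRho k n X = 0 := by
  have h3 : rhoMat k n ^ 3 = -(rhoMat k n) := by
    simp [rhoMat, Jmat, pow_succ, Matrix.fromBlocks_multiply, Matrix.fromBlocks_neg]
  have hs5 : (5 : ℝ) • adRho k n (adRho k n (adRho k n X)) =
      5 * adRho k n (adRho k n (adRho k n X)) := by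
    rw [show (5:ℝ) = ((5:ℕ):ℝ) by norm_num, Nat.cast_smul_eq_nsmul, nsmul_eq_mul,
      Nat.cast_ofNat]
  have hs4 : (4 : ℝ) • adRho k n X = 4 * adRho k n X := by
    rw [show (4:ℝ) = ((4:ℕ):ℝ) by norm_num, Nat.cast_smul_eq_nsmul, nsmul_eq_mul,
      Nat.cast_ofNat]
  rw [hs5, hs4]
  exact adc_quintic (rhoMat k n) h3 X (adRho k n) (fun Y => rfl)
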